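/- (Corollary 1: correctness of BSCC compression.) Let B_1, …, B_n be an enumeration of all BSCCs of P, let A_i be the attractor of B_i, let T = S \ (A_1 ∪ … ∪ A_n), and fix a state s_i ∈ B_i for each i. Then real numbers g_1, …, g_n together with vectors g defined on T and b : S → ℝ satisfy the BSCC-compressed gain/bias equations, namely (i) g s = ∑_{s' ∈ T} P s s' * g s' + ∑_{i=1}^n g_i * (∑_{s' ∈ A_i} P s s') for all s ∈ T, (ii) b s = ∑_{s' ∈ A_i} P s s' * b s' + r s - g_i for all i and all s ∈ A_i, (iii) b s = ∑_{s'} P s s' * b s' + r s - g s for all s ∈ T, and (iv) b s_i = 0 for each i, if and only if the vector g' : S → ℝ defined by g' s = g_i for s ∈ A_i and g' s = g s for s ∈ T, together with b, satisfies the gain/bias equations for (P, r) and b s_i = 0 for each i. -/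

import Mathlib

open Matrix Finset

/-- A matrix is row-stochastic if all entries are nonnegative and every row sums to 1. -/
def IsRowStochastic {S : Type*} [Fintype S] (P : Matrix S S ℝ) : Prop :=
  (∀ s s', 0 ≤ P s s') ∧ ∀ s, ∑ s', P s s' = 1

/-- The gain/bias equations for a transition matrix `P` and reward vector `r`. -/
def GainBiasEq {S : Type*} [Fintype S] (P : Matrix S S ℝ) (r g b : S → ℝ) : Prop :=
  ∀ s, g s = ∑ s', P s s' * g s' ∧ b s = ∑ s', P s s' * b s' + r s - g s

/-- `s` reaches `s'` if `(s, s')` is in the reflexive-transitive closure of the relation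
"leads to", i.e. `P s s' > 0`. -/
def Reaches {S : Type*} (P : Matrix S S ℝ) : S → S → Prop :=
  Relation.ReflTransGen fun s s' => 0 < P s s'

/-- A set `C` of states is closed if `P s s' = 0` whenever `s ∈ C` and `s' ∉ C`. -/
def IsClosedSet {S : Type*} (P : Matrix S S ℝ) (C : Set S) : Prop :=
  ∀ s ∈ C, ∀ s' ∉ C, P s s' = 0

/-- A bottom strongly connected component (BSCC) of `P` is a nonempty closed set in which
every two states reach each other. -/
def IsBSCC {S : Type*} (P : Matrix S S ℝ) (B : Set S) : Prop :=
  B.Nonempty ∧ IsClosedSet P B ∧ ∀ s ∈ B, ∀ s' ∈ B, Reaches P s s'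

/-- The attractor of a BSCC `B`: the set of states `s` such that every state `t` reachable from
`s` that belongs to some BSCC lies in `B`. -/
def attractor {S : Type*} (P : Matrix S S ℝ) (B : Set S) : Set S :=
  {s | ∀ t, Reaches P s t → (∃ B', IsBSCC P B' ∧ t ∈ B') → t ∈ B}

section Aux

variable {S : Type*} [Fintype S]

/-- Closed sets absorb reachability. -/
lemma mem_of_reaches' {P : Matrix S S ℝ} {C : Set S} (hC : IsClosedSet P C)
    {s t : S} (hs : s ∈ C) (h : Reaches P s t) : t ∈ C := by
  induction h with
  | refl => exact hs
  | tail _ hstep ih =>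
      by_contra hmem
      exact (ne_of_gt hstep) (hC _ ih _ hmem)

/-- The attractor of any set is closed (given nonnegative entries). -/
lemma attractor_isClosed' {P : Matrix S S ℝ} (hP : ∀ s s', 0 ≤ P s s') (B : Set S) :
    IsClosedSet P (attractor P B) := by
  intro s hs s' hs'
  by_contra h
  have hpos : 0 < P s s' := lt_of_le_of_ne (hP s s') (Ne.symm h)
  exact hs' fun t ht hB => hs t (Relation.ReflTransGen.head hpos ht) hB

/-- Every state reaches some BSCC. -/
lemma exists_reaches_bscc' (P : Matrix S S ℝ) (hP : ∀ s s', 0 ≤ P s s') (s : S) :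
    ∃ t, Reaches P s t ∧ ∃ B', IsBSCC P B' ∧ t ∈ B' := by
  classical
  obtain ⟨t, hts, hmin⟩ := Finset.exists_min_image
    (Finset.univ.filter fun t => Reaches P s t)
    (fun t => {u | Reaches P t u}.toFinset.card)
    ⟨s, Finset.mem_filter.mpr ⟨Finset.mem_univ s, Relation.ReflTransGen.refl⟩⟩
  simp only [Finset.mem_filter, Finset.mem_univ, true_and] at hts hmin
  refine ⟨t, hts, {u | Reaches P t u},
    ⟨⟨t, Relation.ReflTransGen.refl⟩, ?_, ?_⟩, Relation.ReflTransGen.refl⟩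
  · intro u hu v hv
    by_contra h
    exact hv (Relation.ReflTransGen.tail hu (lt_of_le_of_ne (hP u v) (Ne.symm h)))
  · intro u hu v hv
    have hsub : {w | Reaches P u w} ⊆ {w | Reaches P t w} :=
      fun w hw => Relation.ReflTransGen.trans hu hw
    have hle := hmin u (Relation.ReflTransGen.trans hts hu)
    have heq : {w | Reaches P u w}.toFinset = {w | Reaches P t w}.toFinset :=
      Finset.eq_of_subset_of_card_le (Set.toFinset_subset_toFinset.mpr hsub) hle
    have hv' : v ∈ {w | Reaches P u w}.toFinset := by
      rw [heq]; exact Set.mem_toFinset.mpr hv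
    exact Set.mem_toFinset.mp hv'

/-- Two BSCCs sharing a state are equal. -/
lemma bscc_eq' {P : Matrix S S ℝ} {B1 B2 : Set S} (h1 : IsBSCC P B1) (h2 : IsBSCC P B2)
    {t : S} (ht1 : t ∈ B1) (ht2 : t ∈ B2) : B1 = B2 := by
  apply Set.Subset.antisymm
  · intro u hu
    exact mem_of_reaches' h2.2.1 ht2 (h1.2.2 t ht1 u hu)
  · intro u hu
    exact mem_of_reaches' h1.2.1 ht1 (h2.2.2 t ht2 u hu)

end Aux

/-- Corollary 1: correctness of BSCC compression.  Given an enumeration `B 1, …, B n` of all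
BSCCs of `P`, attractors `A i` of `B i`, `T` the complement of the union of the attractors and
reference states `sref i ∈ B i`, the numbers `gains i` together with `g` (on `T`) and `b`
satisfy the BSCC-compressed gain/bias equations if and only if the vector `g'` (equal to
`gains i` on `A i` and to `g` on `T`), together with `b`, satisfies the gain/bias equations
for `(P, r)` and `b (sref i) = 0` for each `i`. -/
theorem bscc_compression_correct {S : Type*} [Fintype S] [Nonempty S]
    (P : Matrix S S ℝ) (r : S → ℝ) (hP : IsRowStochastic P)
    (n : ℕ) (B : Fin n → Set S)
    (hB : ∀ i, IsBSCC P (B i))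
    (hBinj : Function.Injective B)
    (hBall : ∀ C : Set S, IsBSCC P C → ∃ i, C = B i)
    (A : Fin n → Set S) (hA : ∀ i, A i = attractor P (B i))
    (T : Set S) (hT : T = (⋃ i, A i)ᶜ)
    (sref : Fin n → S) (hsref : ∀ i, sref i ∈ B i)
    (gains : Fin n → ℝ) (g b g' : S → ℝ)
    (hg'A : ∀ i, ∀ s ∈ A i, g' s = gains i)
    (hg'T : ∀ s ∈ T, g' s = g s) :
    ((∀ s ∈ T, g s = (∑ᶠ s' ∈ T, P s s' * g s') +
        ∑ i, gains i * ∑ᶠ s' ∈ A i, P s s') ∧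
     (∀ i, ∀ s ∈ A i, b s = (∑ᶠ s' ∈ A i, P s s' * b s') + r s - gains i) ∧
     (∀ s ∈ T, b s = (∑ s', P s s' * b s') + r s - g s) ∧
     (∀ i, b (sref i) = 0)) ↔
    (GainBiasEq P r g' b ∧ ∀ i, b (sref i) = 0) := by
  classical
  -- convert finsums over sets to Finset sums
  have hfin : ∀ (C : Set S) (f : S → ℝ), (∑ᶠ s' ∈ C, f s') = ∑ s' ∈ C.toFinset, f s' := by
    intro C f
    rw [← finsum_mem_coe_finset, Set.coe_toFinset]
  simp only [hfin]
  -- restriction of sums to closed sets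
  have hrestrict : ∀ (C : Set S), IsClosedSet P C → ∀ s ∈ C, ∀ f : S → ℝ,
      ∑ s', P s s' * f s' = ∑ s' ∈ C.toFinset, P s s' * f s' := by
    intro C hC s hs f
    symm
    apply Finset.sum_subset (Finset.subset_univ _)
    intro x _ hx
    rw [hC s hs x (by simpa using hx), zero_mul]
  have hrow : ∀ (C : Set S), IsClosedSet P C → ∀ s ∈ C, ∑ s' ∈ C.toFinset, P s s' = 1 := by
    intro C hC s hs
    have h := hrestrict C hC s hs (fun _ => 1)
    simp only [mul_one] at h
    rw [← h, hP.2 s]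
  have hAclosed : ∀ i, IsClosedSet P (A i) := by
    intro i
    rw [hA i]
    exact attractor_isClosed' hP.1 (B i)
  -- attractors are pairwise disjoint
  have hAdisj : ∀ i j : Fin n, ∀ s, s ∈ A i → s ∈ A j → i = j := by
    intro i j s hi hj
    obtain ⟨t, hst, B', hB', htB'⟩ := exists_reaches_bscc' P hP.1 s
    have hti : t ∈ B i := by rw [hA i] at hi; exact hi t hst ⟨B', hB', htB'⟩
    have htj : t ∈ B j := by rw [hA j] at hj; exact hj t hst ⟨B', hB', htB'⟩
    exact hBinj (bscc_eq' (hB i) (hB j) hti htj)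
  -- splitting the full sum into T-part and attractor parts
  have hTc : T.toFinsetᶜ = Finset.univ.biUnion fun i => (A i).toFinset := by
    ext x
    simp [hT, Set.mem_iUnion]
  have hpd : ((Finset.univ : Finset (Fin n)) : Set (Fin n)).PairwiseDisjoint
      fun i => (A i).toFinset := by
    intro i _ j _ hij
    simp only [Function.onFun, Finset.disjoint_left, Set.mem_toFinset]
    exact fun a ha haj => hij (hAdisj i j a ha haj)
  have hsplit : ∀ f : S → ℝ, ∑ s', f s' =
      (∑ s' ∈ T.toFinset, f s') + ∑ i, ∑ s' ∈ (A i).toFinset, f s' := by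
    intro f
    rw [← Finset.sum_add_sum_compl T.toFinset f, hTc, Finset.sum_biUnion hpd]
  have hmemA : ∀ s, s ∉ T → ∃ i, s ∈ A i := by
    intro s hs
    rw [hT] at hs
    simpa [Set.mem_iUnion] using hs
  -- gain equation on attractors holds unconditionally
  have hgainA : ∀ i, ∀ s ∈ A i, g' s = ∑ s', P s s' * g' s' := by
    intro i s hs
    rw [hrestrict (A i) (hAclosed i) s hs g', hg'A i s hs,
      Finset.sum_congr rfl (fun x hx => by rw [hg'A i x (Set.mem_toFinset.mp hx)]),
      ← Finset.sum_mul, hrow (A i) (hAclosed i) s hs, one_mul]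
  -- decomposition of the gain sum
  have hgainT : ∀ s : S, ∑ s', P s s' * g' s' =
      (∑ s' ∈ T.toFinset, P s s' * g s') +
        ∑ i, gains i * ∑ s' ∈ (A i).toFinset, P s s' := by
    intro s
    rw [hsplit (fun s' => P s s' * g' s')]
    congr 1
    · exact Finset.sum_congr rfl fun x hx => by rw [hg'T x (Set.mem_toFinset.mp hx)]
    · refine Finset.sum_congr rfl fun i _ => ?_
      rw [Finset.mul_sum]
      exact Finset.sum_congr rfl fun x hx => by
        rw [hg'A i x (Set.mem_toFinset.mp hx)]; ring
  constructor
  · rintro ⟨h1, h2, h3, h4⟩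
    refine ⟨fun s => ?_, h4⟩
    by_cases hs : s ∈ T
    · constructor
      · rw [hg'T s hs, hgainT s]
        exact h1 s hs
      · rw [hg'T s hs]
        exact h3 s hs
    · obtain ⟨i, hi⟩ := hmemA s hs
      constructor
      · exact hgainA i s hi
      · rw [hg'A i s hi, hrestrict (A i) (hAclosed i) s hi b]
        exact h2 i s hi
  · rintro ⟨hgb, h4⟩
    refine ⟨?_, ?_, ?_, h4⟩
    · intro s hs
      rw [← hgainT s]
      have h := (hgb s).1
      rwa [hg'T s hs] at h
    · intro i s hi
      have h := (hgb s).2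
      rwa [hg'A i s hi, hrestrict (A i) (hAclosed i) s hi b] at h
    · intro s hs
      have h := (hgb s).2
      rwa [hg'T s hs] at h
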